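/- (Cordes inequality) Let H be a complex Hilbert space and let A and B be positive (self-adjoint, nonnegative) bounded linear operators on H. Then for every s with 0 ≤ s ≤ 1, ‖A^s ∘ B^s‖ ≤ ‖A ∘ B‖^s, where ‖·‖ is the operator norm and A^s, B^s denote the s-th powers of A and B defined via the continuous functional calculus for positive operators. -/

import Mathlib

open scoped NNReal ENNReal

namespace CordesAux

lemma cont_rpow {s : ℝ} (hs : 0 ≤ s) : Continuous (fun u : ℝ => u ^ s) :=
  continuous_iff_continuousAt.mpr fun x => Real.continuousAt_rpow_const x s (Or.inr hs)

lemma specRad_mul_comm {A : Type*} [NormedRing A] [NormedAlgebra ℂ A] (a b : A) :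
    spectralRadius ℂ (a * b) = spectralRadius ℂ (b * a) := by
  have key : ∀ x y : A, spectralRadius ℂ (x * y) ≤ spectralRadius ℂ (y * x) := by
    intro x y
    refine iSup₂_le fun k hk => ?_
    rcases eq_or_ne k 0 with rfl | hk0
    · simp
    · have hmem : k ∈ spectrum ℂ (x * y) \ {0} := ⟨hk, hk0⟩
      rw [spectrum.nonzero_mul_comm] at hmem
      exact le_iSup₂ (f := fun k (_ : k ∈ spectrum ℂ (y * x)) => (‖k‖₊ : ℝ≥0∞)) k hmem.1
  exact le_antisymm (key a b) (key b a)

variable {H : Type*} [NormedAddCommGroup H] [InnerProductSpace ℂ H] [CompleteSpace H]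

noncomputable def pw (T : H →L[ℂ] H) (s : ℝ) : H →L[ℂ] H := cfc (fun u : ℝ => u ^ s) T

variable {T A B : H →L[ℂ] H}

lemma spec_nonneg (hT : T.IsPositive) {x : ℝ} (hx : x ∈ spectrum ℝ T) : 0 ≤ x :=
  spectrum_nonneg_of_nonneg ((ContinuousLinearMap.nonneg_iff_isPositive T).mpr hT) hx

lemma pw_sa (s : ℝ) : IsSelfAdjoint (pw T s) := cfc_predicate _ T

lemma pw_mul (hT : T.IsPositive) {u v : ℝ} (hu : 0 ≤ u) (hv : 0 ≤ v) :
    pw T u * pw T v = pw T (u + v) := by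
  rw [pw, pw, pw, ← cfc_mul _ _ T ((cont_rpow hu).continuousOn) ((cont_rpow hv).continuousOn)]
  refine cfc_congr fun x hx => ?_
  have hx0 : 0 ≤ x := spec_nonneg hT hx
  show x ^ u * x ^ v = x ^ (u + v)
  rcases eq_or_lt_of_le (add_nonneg hu hv) with h | h
  · obtain ⟨rfl, rfl⟩ := (add_eq_zero_iff_of_nonneg hu hv).mp h.symm
    simp
  · rw [Real.rpow_add' hx0 h.ne']

lemma pw_one (hT : T.IsPositive) : pw T 1 = T := by
  have h : pw T 1 = cfc (id : ℝ → ℝ) T := cfc_congr fun x _ => Real.rpow_one x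
  rw [h, cfc_id ℝ T hT.isSelfAdjoint]

lemma pw_zero (hT : T.IsPositive) : pw T 0 = 1 := by
  have h : pw T 0 = cfc (1 : ℝ → ℝ) T := cfc_congr fun x _ => Real.rpow_zero x
  rw [h, cfc_one ℝ T hT.isSelfAdjoint]

section nontrivial
variable [Nontrivial H]

lemma pw_norm_le (hT : T.IsPositive) {s : ℝ} (hs0 : 0 ≤ s) (hs1 : s ≤ 1) :
    ‖pw T s‖ ≤ max 1 ‖T‖ := by
  refine norm_cfc_le (le_max_of_le_left zero_le_one) fun x hx => ?_
  have hx0 : 0 ≤ x := spec_nonneg hT hx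
  rw [Real.norm_of_nonneg (Real.rpow_nonneg hx0 s)]
  rcases le_total x 1 with h1 | h1
  · exact le_max_of_le_left (Real.rpow_le_one hx0 h1 hs0)
  · refine le_max_of_le_right ?_
    calc x ^ s ≤ x ^ (1 : ℝ) := Real.rpow_le_rpow_of_exponent_le h1 hs1
    _ = x := Real.rpow_one x
    _ ≤ ‖T‖ := by simpa [Real.norm_of_nonneg hx0] using spectrum.norm_le_norm_of_mem hx

/-- The key "log-midpoint-convexity" inequality. -/
lemma key (hA : A.IsPositive) (hB : B.IsPositive) {u v : ℝ} (hu : 0 ≤ u) (hv : 0 ≤ v) :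
    ‖pw A ((u + v) / 2) * pw B ((u + v) / 2)‖₊ ^ 2 ≤
      ‖pw A u * pw B u‖₊ * ‖pw A v * pw B v‖₊ := by
  set m := (u + v) / 2 with hm
  have hm0 : 0 ≤ m := by positivity
  have hPsa : ∀ t, IsSelfAdjoint (pw A t) := fun t => pw_sa t
  have hQsa : ∀ t, IsSelfAdjoint (pw B t) := fun t => pw_sa t
  have hmm : m + m = u + v := by rw [hm]; ring
  set X : H →L[ℂ] H := pw B m * pw A (u + v) * pw B m with hX
  have e1 : ‖pw A m * pw B m‖₊ ^ 2 = ‖X‖₊ := by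
    have : X = star (pw A m * pw B m) * (pw A m * pw B m) := by
      rw [star_mul, (hPsa m).star_eq, (hQsa m).star_eq, hX]
      rw [show pw B m * pw A m * (pw A m * pw B m) = pw B m * (pw A m * pw A m) * pw B m by simp only [mul_assoc]]
      rw [pw_mul hA hm0 hm0, hmm]
    rw [this, CStarRing.nnnorm_star_mul_self, sq]
  have hXsa : IsSelfAdjoint X := by
    exact (hPsa (u + v)).conjugate_self (hQsa m)
  have e2 : (‖X‖₊ : ℝ≥0∞) = spectralRadius ℂ X := (hXsa.spectralRadius_eq_nnnorm).symm
  have e3 : spectralRadius ℂ X = spectralRadius ℂ ((pw A v * pw B v) * (pw B u * pw A u)) := by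
    calc spectralRadius ℂ X = spectralRadius ℂ (pw B m * (pw A (u + v) * pw B m)) := by
          rw [hX, mul_assoc]
    _ = spectralRadius ℂ ((pw A (u + v) * pw B m) * pw B m) := specRad_mul_comm _ _
    _ = spectralRadius ℂ (pw A (u + v) * pw B (u + v)) := by
          rw [mul_assoc, pw_mul hB hm0 hm0, hmm]
    _ = spectralRadius ℂ (pw A u * ((pw A v * pw B v) * pw B u)) := by
          have hQuv : pw B (u + v) = pw B v * pw B u := by
            rw [pw_mul hB hv hu, add_comm]
          rw [← pw_mul hA hu hv, hQuv]
          simp only [mul_assoc]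
    _ = spectralRadius ℂ (((pw A v * pw B v) * pw B u) * pw A u) := specRad_mul_comm _ _
    _ = spectralRadius ℂ ((pw A v * pw B v) * (pw B u * pw A u)) := by rw [mul_assoc]
  have e4 : spectralRadius ℂ ((pw A v * pw B v) * (pw B u * pw A u)) ≤
      (‖pw A v * pw B v‖₊ * ‖pw B u * pw A u‖₊ : ℝ≥0) := by
    refine (spectrum.spectralRadius_le_nnnorm (𝕜 := ℂ) _).trans ?_
    exact_mod_cast ENNReal.coe_le_coe.mpr (nnnorm_mul_le _ _)
  have e5 : ‖pw B u * pw A u‖₊ = ‖pw A u * pw B u‖₊ := by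
    rw [← nnnorm_star, star_mul, (hPsa u).star_eq, (hQsa u).star_eq]
  have : (‖X‖₊ : ℝ≥0∞) ≤ (‖pw A v * pw B v‖₊ * ‖pw B u * pw A u‖₊ : ℝ≥0) := by
    rw [e2, e3]; exact e4
  rw [e1]
  have := ENNReal.coe_le_coe.mp this
  rw [e5] at this
  calc ‖X‖₊ ≤ ‖pw A v * pw B v‖₊ * ‖pw A u * pw B u‖₊ := this
  _ = ‖pw A u * pw B u‖₊ * ‖pw A v * pw B v‖₊ := mul_comm _ _

lemma key' (hA : A.IsPositive) (hB : B.IsPositive) {u v : ℝ} (hu : 0 ≤ u) (hv : 0 ≤ v) :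
    ‖pw A ((u + v) / 2) * pw B ((u + v) / 2)‖ ^ 2 ≤
      ‖pw A u * pw B u‖ * ‖pw A v * pw B v‖ := by
  have := key hA hB hu hv
  have := NNReal.coe_le_coe.mpr this
  push_cast at this
  simpa [← coe_nnnorm] using this

lemma F_le_K (hA : A.IsPositive) (hB : B.IsPositive) {t : ℝ} (ht0 : 0 ≤ t) (ht1 : t ≤ 1) :
    ‖pw A t * pw B t‖ ≤ max 1 ‖A‖ * max 1 ‖B‖ :=
  calc ‖pw A t * pw B t‖ ≤ ‖pw A t‖ * ‖pw B t‖ := norm_mul_le _ _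
  _ ≤ max 1 ‖A‖ * max 1 ‖B‖ :=
      mul_le_mul (pw_norm_le hA ht0 ht1) (pw_norm_le hB ht0 ht1) (norm_nonneg _)
        (le_trans zero_le_one (le_max_left _ _))

lemma main_ind (hA : A.IsPositive) (hB : B.IsPositive) :
    ∀ n : ℕ, ∀ s : ℝ, 0 ≤ s → s ≤ 1 →
      ‖pw A s * pw B s‖ ^ (2 ^ n) ≤
        ‖A * B‖ ^ (⌊(2 : ℝ) ^ n * s⌋₊) * (max 1 ‖A‖ * max 1 ‖B‖) := by
  have hK1 : (1 : ℝ) ≤ max 1 ‖A‖ * max 1 ‖B‖ :=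
    one_le_mul_of_one_le_of_one_le (le_max_left _ _) (le_max_left _ _)
  intro n
  induction n with
  | zero =>
    intro s hs0 hs1
    simp only [pow_zero, pow_one, one_mul]
    rcases eq_or_lt_of_le hs1 with rfl | hlt
    · rw [pw_one hA, pw_one hB, show ⌊(1:ℝ)⌋₊ = 1 by norm_num, pow_one]
      nlinarith [norm_nonneg (A * B)]
    · rw [Nat.floor_eq_zero.mpr hlt, pow_zero, one_mul]
      exact F_le_K hA hB hs0 hs1
  | succ n ih =>
    intro s hs0 hs1
    set C := ‖A * B‖ with hC
    set K := max 1 ‖A‖ * max 1 ‖B‖ with hKdef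
    have hC0 : 0 ≤ C := norm_nonneg _
    have hF0 : 0 ≤ ‖pw A s * pw B s‖ := norm_nonneg _
    have hpow : ‖pw A s * pw B s‖ ^ 2 ^ (n + 1) = (‖pw A s * pw B s‖ ^ 2) ^ 2 ^ n := by
      rw [← pow_mul, pow_succ, mul_comm]
    by_cases hb : (1 : ℝ) / 2 ≤ s
    · -- bit = 1
      set s' := 2 * s - 1 with hs'
      have hs'0 : 0 ≤ s' := by rw [hs']; linarith
      have hs'1 : s' ≤ 1 := by rw [hs']; linarith
      have hmid : ((1 : ℝ) + s') / 2 = s := by rw [hs']; ring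
      have hkey := key' hA hB zero_le_one hs'0
      rw [hmid, pw_one hA, pw_one hB] at hkey
      have h1 : ‖pw A s * pw B s‖ ^ 2 ≤ C * ‖pw A s' * pw B s'‖ := hkey
      have h2 : (‖pw A s * pw B s‖ ^ 2) ^ 2 ^ n ≤ (C * ‖pw A s' * pw B s'‖) ^ 2 ^ n :=
        pow_le_pow_left₀ (by positivity) h1 _
      have h3 : (C * ‖pw A s' * pw B s'‖) ^ 2 ^ n
          = C ^ 2 ^ n * (‖pw A s' * pw B s'‖) ^ 2 ^ n := mul_pow _ _ _
      have h4 := ih s' hs'0 hs'1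
      have hfloor : ⌊(2 : ℝ) ^ (n + 1) * s⌋₊ = 2 ^ n + ⌊(2 : ℝ) ^ n * s'⌋₊ := by
        have : (2 : ℝ) ^ (n + 1) * s = (2 : ℝ) ^ n * s' + (2 ^ n : ℕ) := by
          push_cast; rw [hs']; ring
        rw [this, Nat.floor_add_natCast (by positivity), add_comm]
      calc ‖pw A s * pw B s‖ ^ 2 ^ (n + 1)
          = (‖pw A s * pw B s‖ ^ 2) ^ 2 ^ n := hpow
        _ ≤ C ^ 2 ^ n * (‖pw A s' * pw B s'‖) ^ 2 ^ n := h2.trans_eq h3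
        _ ≤ C ^ 2 ^ n * (C ^ (⌊(2 : ℝ) ^ n * s'⌋₊) * K) := by
            exact mul_le_mul_of_nonneg_left h4 (by positivity)
        _ = C ^ (2 ^ n + ⌊(2 : ℝ) ^ n * s'⌋₊) * K := by rw [pow_add]; ring
        _ = C ^ (⌊(2 : ℝ) ^ (n + 1) * s⌋₊) * K := by rw [hfloor]
    · -- bit = 0
      push_neg at hb
      set s' := 2 * s with hs'
      have hs'0 : 0 ≤ s' := by rw [hs']; linarith
      have hs'1 : s' ≤ 1 := by rw [hs']; linarith
      have hmid : ((0 : ℝ) + s') / 2 = s := by rw [hs']; ring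
      have hkey := key' hA hB le_rfl hs'0
      rw [hmid, pw_zero hA, pw_zero hB, one_mul, norm_one, one_mul] at hkey
      have h2 : (‖pw A s * pw B s‖ ^ 2) ^ 2 ^ n ≤ (‖pw A s' * pw B s'‖) ^ 2 ^ n :=
        pow_le_pow_left₀ (by positivity) hkey _
      have h4 := ih s' hs'0 hs'1
      have hfloor : ⌊(2 : ℝ) ^ (n + 1) * s⌋₊ = ⌊(2 : ℝ) ^ n * s'⌋₊ := by
        congr 1
        rw [hs']; ring
      calc ‖pw A s * pw B s‖ ^ 2 ^ (n + 1)
          = (‖pw A s * pw B s‖ ^ 2) ^ 2 ^ n := hpow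
        _ ≤ (‖pw A s' * pw B s'‖) ^ 2 ^ n := h2
        _ ≤ C ^ (⌊(2 : ℝ) ^ n * s'⌋₊) * K := h4
        _ = C ^ (⌊(2 : ℝ) ^ (n + 1) * s⌋₊) * K := by rw [hfloor]

lemma cordes_pos (hA : A.IsPositive) (hB : B.IsPositive) {s : ℝ} (hs0 : 0 < s) (hs1 : s ≤ 1) :
    ‖pw A s * pw B s‖ ≤ ‖A * B‖ ^ s := by
  set C := ‖A * B‖ with hC
  set K := max 1 ‖A‖ * max 1 ‖B‖ with hKdef
  have hC0 : 0 ≤ C := norm_nonneg _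
  have hK1 : (1 : ℝ) ≤ K :=
    one_le_mul_of_one_le_of_one_le (le_max_left _ _) (le_max_left _ _)
  have hK0 : (0 : ℝ) < K := lt_of_lt_of_le one_pos hK1
  set X := ‖pw A s * pw B s‖ with hXdef
  have hX0 : 0 ≤ X := norm_nonneg _
  -- the sequence of bounds
  have hFle : ∀ n : ℕ, X ≤ C ^ ((⌊(2 : ℝ) ^ n * s⌋₊ : ℝ) / 2 ^ n) * K ^ (((2 : ℝ) ^ n)⁻¹) := by
    intro n
    have hmain := main_ind hA hB n s hs0.le hs1
    set e := ⌊(2 : ℝ) ^ n * s⌋₊ with he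
    have hN : (2 ^ n : ℕ) ≠ 0 := by positivity
    have hM0 : (0 : ℝ) ≤ C ^ e * K := by positivity
    have := Real.rpow_le_rpow (by positivity) hmain (by positivity : (0:ℝ) ≤ ((2 ^ n : ℕ) : ℝ)⁻¹)
    rw [Real.pow_rpow_inv_natCast hX0 hN] at this
    refine this.trans_eq ?_
    rw [Real.mul_rpow (by positivity) (le_trans zero_le_one hK1)]
    congr 1
    · rw [← Real.rpow_natCast C e, ← Real.rpow_mul hC0]
      push_cast
      rw [div_eq_mul_inv]
    · push_cast
      rfl
  -- the limit
  have h2pos : ∀ n : ℕ, (0 : ℝ) < 2 ^ n := fun n => by positivity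
  have htend : Filter.Tendsto (fun n : ℕ => (⌊(2 : ℝ) ^ n * s⌋₊ : ℝ) / 2 ^ n)
      Filter.atTop (nhds s) := by
    have hinv : Filter.Tendsto (fun n : ℕ => ((2 : ℝ) ^ n)⁻¹) Filter.atTop (nhds 0) := by
      simp only [← inv_pow]
      exact tendsto_pow_atTop_nhds_zero_of_lt_one (by norm_num) (by norm_num)
    have hlow : Filter.Tendsto (fun n : ℕ => s - ((2 : ℝ) ^ n)⁻¹) Filter.atTop (nhds s) := by
      simpa using (tendsto_const_nhds (x := s)).sub hinv
    refine tendsto_of_tendsto_of_tendsto_of_le_of_le hlow tendsto_const_nhds ?_ ?_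
    · intro n
      have h1 : (2 : ℝ) ^ n * s - 1 < (⌊(2 : ℝ) ^ n * s⌋₊ : ℝ) := by
        have := Nat.lt_floor_add_one ((2 : ℝ) ^ n * s)
        linarith
      rw [sub_le_iff_le_add, div_add' _ _ _ (h2pos n).ne', le_div_iff₀ (h2pos n)]
      have : ((2:ℝ)^n)⁻¹ * 2 ^ n = 1 := inv_mul_cancel₀ (h2pos n).ne'
      nlinarith [h1]
    · intro n
      rw [div_le_iff₀ (h2pos n)]
      have := Nat.floor_le (by positivity : (0:ℝ) ≤ (2 : ℝ) ^ n * s)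
      linarith
  have hinv0 : Filter.Tendsto (fun n : ℕ => ((2 : ℝ) ^ n)⁻¹) Filter.atTop (nhds 0) := by
    simp only [← inv_pow]
    exact tendsto_pow_atTop_nhds_zero_of_lt_one (by norm_num) (by norm_num)
  have hcontC : ContinuousAt (fun x : ℝ => C ^ x) s := by
    rcases eq_or_ne C 0 with hC' | hC'
    · exact hC' ▸ Real.continuousAt_const_rpow' hs0.ne'
    · exact Real.continuousAt_const_rpow hC'
  have hcontK : ContinuousAt (fun x : ℝ => K ^ x) 0 :=
    Real.continuousAt_const_rpow hK0.ne'
  have hlim : Filter.Tendsto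
      (fun n : ℕ => C ^ ((⌊(2 : ℝ) ^ n * s⌋₊ : ℝ) / 2 ^ n) * K ^ (((2 : ℝ) ^ n)⁻¹))
      Filter.atTop (nhds (C ^ s * K ^ (0 : ℝ))) :=
    (hcontC.tendsto.comp htend).mul (hcontK.tendsto.comp hinv0)
  rw [Real.rpow_zero, mul_one] at hlim
  exact ge_of_tendsto' hlim hFle

end nontrivial

end CordesAux

/-- Cordes inequality: for positive bounded operators `A, B` on a complex
Hilbert space and `s ∈ [0,1]`, `‖A^s ∘ B^s‖ ≤ ‖A ∘ B‖^s`, where powers are taken via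
the continuous functional calculus. -/
theorem stmt_5 {H : Type*} [NormedAddCommGroup H] [InnerProductSpace ℂ H]
    [CompleteSpace H]
    (A B : H →L[ℂ] H) (hA : A.IsPositive) (hB : B.IsPositive)
    (s : ℝ) (hs : s ∈ Set.Icc (0 : ℝ) 1) :
    ‖cfc (fun u : ℝ => u ^ s) A ∘L cfc (fun u : ℝ => u ^ s) B‖ ≤ ‖A ∘L B‖ ^ s := by
  obtain ⟨hs0, hs1⟩ := hs
  rcases subsingleton_or_nontrivial H with hH | hH
  · rw [Subsingleton.elim (cfc (fun u : ℝ => u ^ s) A ∘L cfc (fun u : ℝ => u ^ s) B) 0,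
      norm_zero]
    exact Real.rpow_nonneg (norm_nonneg _) s
  · show ‖CordesAux.pw A s * CordesAux.pw B s‖ ≤ ‖A * B‖ ^ s
    rcases eq_or_lt_of_le hs0 with rfl | hs0'
    · rw [CordesAux.pw_zero hA, CordesAux.pw_zero hB, mul_one, Real.rpow_zero]
      exact norm_one.le
    · exact CordesAux.cordes_pos hA hB hs0' hs1
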